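/- (Standardization commutes with inversion) For any ordered restricted (X,Y)-biword w, the inversion of its •-standardization equals the •-standardization of its inversion: (w•)^inv = (w^inv)•. -/

import Mathlib

namespace SuperRSK

variable {X Y : Type*}

/-- The super order `≺` on a superalphabet: `a ≺ b` iff (`a` odd, `b` even), or
(both even and `a < b`), or (both odd and `a > b`). Odd means parity `true`. -/
def SuperPrec [LinearOrder X] (par : X → Bool) (a b : X) : Prop :=
  (par a = true ∧ par b = false) ∨
  (par a = false ∧ par b = false ∧ a < b) ∨
  (par a = true ∧ par b = true ∧ b < a)

/-- The `δ`-coordinate of a node: row if `δ = false`, column if `δ = true`. -/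
def coord (δ : Bool) (u : ℕ × ℕ) : ℕ := if δ then u.2 else u.1

/-- A tableau is a function `ℕ × ℕ → WithTop X`, equal to `⊤` outside its diagram.
Semistandard: the support is a Young diagram and entries are non-decreasing
(both encoded by monotonicity into `WithTop X`), equal entries in a row are even,
and equal entries in a column are odd. -/
def IsSStd [LinearOrder X] (par : X → Bool) (T : ℕ × ℕ → WithTop X) : Prop :=
  (∀ u v : ℕ × ℕ, u.1 ≤ v.1 → u.2 ≤ v.2 → T u ≤ T v) ∧
  (∀ u v : ℕ × ℕ, ∀ a : X, u.1 = v.1 → u.2 < v.2 → T u = (a : WithTop X) →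
    T v = (a : WithTop X) → par a = false) ∧
  (∀ u v : ℕ × ℕ, ∀ a : X, u.2 = v.2 → u.1 < v.1 → T u = (a : WithTop X) →
    T v = (a : WithTop X) → par a = true)

/-- A standard tableau: semistandard with no repeated letters. -/
def IsStd [LinearOrder X] (par : X → Bool) (T : ℕ × ℕ → WithTop X) : Prop :=
  IsSStd par T ∧
  ∀ u v : ℕ × ℕ, ∀ a : X, T u = (a : WithTop X) → T v = (a : WithTop X) → u = v

/-- The comparison used in `ε`-insertion: strict for `ε = false`, weak for `ε = true`. -/
def cmpIns [LinearOrder X] (ε : Bool) (x : X) (v : WithTop X) : Prop :=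
  if ε then (x : WithTop X) ≤ v else (x : WithTop X) < v

/-- The comparison used in `ε`-extraction: strict for `ε = false`, weak for `ε = true`. -/
def cmpExt [LinearOrder X] (ε : Bool) (y : X) (v : WithTop X) : Prop :=
  if ε then v ≤ (y : WithTop X) else v < (y : WithTop X)

/-- `BumpSeq ε par T x b xs m` says `b 0, …, b (m-1)` is the bumped node sequence and
`xs 0, …, xs (m-1)` the bumped letter sequence for the `ε`-insertion of `x` into `T`:
`xs 0 = x`; at step `j` the current letter `xs j` is placed at the smallest node `b j`
of the `i`-th row (if `ε + parity (xs j) = 0`) or column (if `= 1`) satisfying the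
`ε`-comparison, where `i = 0` at the start and afterwards is one more than the
corresponding coordinate of the previous bumped node; the bumped letter becomes the
next inserted letter, until an empty node (`⊤`) is reached. -/
def BumpSeq [LinearOrder X] (ε : Bool) (par : X → Bool) (T : ℕ × ℕ → WithTop X)
    (x : X) (b : ℕ → ℕ × ℕ) (xs : ℕ → X) (m : ℕ) : Prop :=
  0 < m ∧ xs 0 = x ∧
  (∀ j, j + 1 < m → T (b j) = (xs (j + 1) : WithTop X)) ∧
  T (b (m - 1)) = ⊤ ∧
  ∀ j, j < m →
    (coord (Bool.xor ε (par (xs j))) (b j) =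
      (if j = 0 then 0 else coord (Bool.xor ε (par (xs j))) (b (j - 1)) + 1)) ∧
    cmpIns ε (xs j) (T (b j)) ∧
    ∀ v : ℕ × ℕ,
      coord (Bool.xor ε (par (xs j))) v = coord (Bool.xor ε (par (xs j))) (b j) →
      cmpIns ε (xs j) (T v) →
      coord (!(Bool.xor ε (par (xs j)))) (b j) ≤ coord (!(Bool.xor ε (par (xs j)))) v

/-- `InsResult T b xs m R` says `R` is the tableau obtained from `T` by the insertion
with bumped nodes `b` and bumped letters `xs`: `R (b k) = xs k` and `R` agrees with `T`
elsewhere. -/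
def InsResult [LinearOrder X] (T : ℕ × ℕ → WithTop X) (b : ℕ → ℕ × ℕ) (xs : ℕ → X)
    (m : ℕ) (R : ℕ × ℕ → WithTop X) : Prop :=
  (∀ k, k < m → R (b k) = (xs k : WithTop X)) ∧
  ∀ u : ℕ × ℕ, (∀ k, k < m → u ≠ b k) → R u = T u

/-- `ExtractSeq ε par T u c ys m` says `c 0, …, c (m-1)` is the unbumped node sequence
and `ys 0, …, ys (m-1)` the unbumped letter sequence for the `ε`-extraction at `u`:
`c 0 = u`, `ys 0 = T u`; at each step `c (j+1)` is the greatest node, in the row/column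
(according to `ε` plus the parity of `ys j`) preceding that of `c j`, whose entry is
`ε`-below `ys j`; the process stops upon reaching the first row/column. -/
def ExtractSeq [LinearOrder X] (ε : Bool) (par : X → Bool) (T : ℕ × ℕ → WithTop X)
    (u : ℕ × ℕ) (c : ℕ → ℕ × ℕ) (ys : ℕ → X) (m : ℕ) : Prop :=
  0 < m ∧ c 0 = u ∧ T u = (ys 0 : WithTop X) ∧
  (∀ j, j + 1 < m →
    0 < coord (Bool.xor ε (par (ys j))) (c j) ∧
    coord (Bool.xor ε (par (ys j))) (c (j + 1)) + 1 =
      coord (Bool.xor ε (par (ys j))) (c j) ∧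
    T (c (j + 1)) = (ys (j + 1) : WithTop X) ∧
    cmpExt ε (ys j) (T (c (j + 1))) ∧
    ∀ v : ℕ × ℕ,
      coord (Bool.xor ε (par (ys j))) v + 1 = coord (Bool.xor ε (par (ys j))) (c j) →
      cmpExt ε (ys j) (T v) →
      coord (!(Bool.xor ε (par (ys j)))) v ≤ coord (!(Bool.xor ε (par (ys j)))) (c (j + 1))) ∧
  coord (Bool.xor ε (par (ys (m - 1)))) (c (m - 1)) = 0

/-- `ExtResult T c ys m R` says `R` is the tableau obtained from `T` by the extraction
with unbumped nodes `c` and letters `ys`: each `c k` (`k ≥ 1`) receives `ys (k-1)`, the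
initial node `c 0` is emptied, and `R` agrees with `T` elsewhere. -/
def ExtResult [LinearOrder X] (T : ℕ × ℕ → WithTop X) (c : ℕ → ℕ × ℕ) (ys : ℕ → X)
    (m : ℕ) (R : ℕ × ℕ → WithTop X) : Prop :=
  (∀ k, 0 < k → k < m → R (c k) = (ys (k - 1) : WithTop X)) ∧
  (∀ v : ℕ × ℕ, (∀ k, k < m → v ≠ c k) → R v = T v) ∧
  ((∀ k, 0 < k → k < m → c 0 ≠ c k) → R (c 0) = ⊤)

/-- The (non-strict) order `⊴` on biletters: `(x₁,y₁) ⊴ (x₂,y₂)` iff `y₁ < y₂`, or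
`y₁ = y₂` and `x₁ ≼ x₂` in the super order on `X`. -/
def BiLE [LinearOrder X] [LinearOrder Y] (parX : X → Bool) (p q : X × Y) : Prop :=
  p.2 < q.2 ∨ (p.2 = q.2 ∧ (SuperPrec parX p.1 q.1 ∨ p.1 = q.1))

/-- A biword is restricted if no mixed-parity biletter occurs more than once. -/
def Restricted [LinearOrder X] [LinearOrder Y] (parX : X → Bool) (parY : Y → Bool)
    (w : List (X × Y)) : Prop :=
  ∀ p : X × Y, Bool.xor (parX p.1) (parY p.2) = true →
    Nat.card {i : Fin w.length // w.get i = p} ≤ 1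

/-- The super RSK relation: `SRSKRel parX parY w P Q` holds iff starting from the empty
tableau and successively `ε`-inserting `x` with `ε = parity y` for each biletter
`(x, y)` of `w` (in order), recording `y` at each added node, produces insertion
tableau `P` and recording tableau `Q`. -/
inductive SRSKRel [LinearOrder X] [LinearOrder Y] (parX : X → Bool) (parY : Y → Bool) :
    List (X × Y) → ((ℕ × ℕ) → WithTop X) → ((ℕ × ℕ) → WithTop Y) → Prop
  | nil : SRSKRel parX parY [] (fun _ => ⊤) (fun _ => ⊤)
  | snoc {w P Q x y b xs m P'} :
      SRSKRel parX parY w P Q →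
      BumpSeq (parY y) parX P x b xs m →
      InsResult P b xs m P' →
      SRSKRel parX parY (w ++ [(x, y)]) P'
        (fun u => if u = b (m - 1) then (y : WithTop Y) else Q u)

/-- `w'` is the inversion of `w`: the unique ordered biword whose biletters are
those of `w` with entries swapped. -/
def IsInversion [LinearOrder X] [LinearOrder Y] (parY : Y → Bool)
    (w : List (X × Y)) (w' : List (Y × X)) : Prop :=
  List.Pairwise (BiLE parY) w' ∧ (↑w' : Multiset (Y × X)) = ↑(w.map Prod.swap)

/-- Parity on the standardizing alphabet `X ×ₗ ℕ`. -/
def bpar (par : X → Bool) (p : X ×ₗ ℕ) : Bool := par (ofLex p).1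

/-- Number of biletters of `w` equal to `(x, y)`. -/
noncomputable def countPair (w : List (X × Y)) (x : X) (y : Y) : ℕ :=
  Nat.card {i : Fin w.length // w.get i = (x, y)}

/-- Number of biletters of `w` with left entry `x` and right entry `≺ y`
(this is `ℓ_{i,1} + ⋯ + ℓ_{i,j-1}` in the definition of `•`-standardization). -/
noncomputable def lcount [LinearOrder Y] (parY : Y → Bool) (w : List (X × Y)) (x : X) (y : Y) : ℕ :=
  Nat.card {i : Fin w.length // (w.get i).1 = x ∧ SuperPrec parY (w.get i).2 y}

/-- Number of biletters of `w` with right entry `y` and left entry `≺ x`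
(this is `ℓ_{1,j} + ⋯ + ℓ_{i-1,j}`). -/
noncomputable def rcount [LinearOrder X] (parX : X → Bool) (w : List (X × Y)) (x : X) (y : Y) : ℕ :=
  Nat.card {i : Fin w.length // (w.get i).2 = y ∧ SuperPrec parX (w.get i).1 x}

/-- `w'` is the `•`-standardization of `w`: the ordered biword over the standardizing
alphabets whose biletters are `(x^(A+m), y^(B+m))` for `m ∈ [1, ℓ]` when `y` is even,
and `(x^(A+m), y^(B+ℓ+1−m))` when `y` is odd, where `ℓ` is the multiplicity of `(x,y)`
in `w`, `A = lcount` and `B = rcount`. -/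
def IsBulletBiword [LinearOrder X] [LinearOrder Y] (parX : X → Bool) (parY : Y → Bool)
    (w : List (X × Y)) (w' : List ((X ×ₗ ℕ) × (Y ×ₗ ℕ))) : Prop :=
  List.Pairwise (BiLE (bpar parX)) w' ∧
  w'.length = w.length ∧
  ∀ (x : X) (a : ℕ) (y : Y) (bb : ℕ),
    (toLex (x, a), toLex (y, bb)) ∈ w' ↔
      ∃ m, 1 ≤ m ∧ m ≤ countPair w x y ∧ a = lcount parY w x y + m ∧
        bb = (if parY y = false then rcount parX w x y + m
              else rcount parX w x y + countPair w x y + 1 - m)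

/-! ### Auxiliary lemmas for `stmt18` -/

lemma superPrec_asymm [LinearOrder X] {par : X → Bool} {a b : X}
    (h : SuperPrec par a b) (h' : SuperPrec par b a) : False := by
  rcases h with (⟨h1,h2⟩|⟨h1,h2,h3⟩|⟨h1,h2,h3⟩) <;>
    rcases h' with (⟨g1,g2⟩|⟨g1,g2,g3⟩|⟨g1,g2,g3⟩) <;> simp_all <;>
      exact absurd h3 (not_lt.mpr g3.le)

lemma biLE_antisymm [LinearOrder X] [LinearOrder Y] (parX : X → Bool) {p q : X × Y}
    (h : BiLE parX p q) (h' : BiLE parX q p) : p = q := by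
  rcases h with h | ⟨h1, h2⟩
  · rcases h' with h' | ⟨h1', _⟩
    · exact absurd (h.trans h') (lt_irrefl _)
    · exact absurd (h1' ▸ h) (lt_irrefl _)
  · rcases h' with h' | ⟨_, h2'⟩
    · exact absurd (h1 ▸ h') (lt_irrefl _)
    · rcases h2 with h2 | h2
      · rcases h2' with h2' | h2'
        · exact absurd (superPrec_asymm h2 h2') id
        · exact absurd (h2' ▸ h2) (fun hh => superPrec_asymm hh hh)
      · exact Prod.ext h2 h1

lemma natCard_eq_countP {α : Type*} (l : List α) (P : α → Prop) [DecidablePred P] :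
    Nat.card {i : Fin l.length // P (l.get i)} = l.countP (fun a => decide (P a)) := by
  haveI : DecidablePred (fun i : Fin l.length => P (l.get i)) := fun i => ‹DecidablePred P› _
  rw [Nat.card_eq_fintype_card, Fintype.card_subtype]
  conv_rhs => rw [← List.map_get_finRange l, List.countP_map]
  rw [List.countP_eq_length_filter, Fin.univ_def]
  simp only [Finset.filter, Finset.card, Multiset.filter_coe, Multiset.coe_card]
  simp only [Function.comp_def]
  congr 1
  refine List.filter_congr fun i _ => ?_
  exact decide_eq_decide.mpr Iff.rfl

open Classical in
lemma countPair_eq_countP [LinearOrder X] [LinearOrder Y] (w : List (X × Y)) (x : X) (y : Y) :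
    countPair w x y = w.countP (fun q => decide (q = (x, y))) :=
  natCard_eq_countP w (fun q => q = (x, y))

open Classical in
lemma lcount_eq_countP [LinearOrder X] [LinearOrder Y] (parY : Y → Bool)
    (w : List (X × Y)) (x : X) (y : Y) :
    lcount parY w x y = w.countP (fun q => decide (q.1 = x ∧ SuperPrec parY q.2 y)) :=
  natCard_eq_countP w (fun q => q.1 = x ∧ SuperPrec parY q.2 y)

open Classical in
lemma rcount_eq_countP [LinearOrder X] [LinearOrder Y] (parX : X → Bool)
    (w : List (X × Y)) (x : X) (y : Y) :
    rcount parX w x y = w.countP (fun q => decide (q.2 = y ∧ SuperPrec parX q.1 x)) :=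
  natCard_eq_countP w (fun q => q.2 = y ∧ SuperPrec parX q.1 x)

lemma mem_of_one_le_countPair [LinearOrder X] [LinearOrder Y] {w : List (X × Y)} {x : X} {y : Y}
    (h : 1 ≤ countPair w x y) : (x, y) ∈ w := by
  classical
  rw [countPair_eq_countP] at h
  obtain ⟨a, ha, hq⟩ := List.countP_pos_iff.mp h
  simp only [decide_eq_true_eq] at hq
  exact hq ▸ ha

/-- The `m`-th standardized biletter coming from biletter `p` of `w`. -/
noncomputable def stdElem [LinearOrder X] [LinearOrder Y] (parX : X → Bool) (parY : Y → Bool)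
    (w : List (X × Y)) (p : X × Y) (m : ℕ) : (X ×ₗ ℕ) × (Y ×ₗ ℕ) :=
  (toLex (p.1, lcount parY w p.1 p.2 + m),
   toLex (p.2, if parY p.2 = false then rcount parX w p.1 p.2 + m
     else rcount parX w p.1 p.2 + countPair w p.1 p.2 + 1 - m))

/-- The set of biletters of the `•`-standardization of `w`. -/
noncomputable def stdFinset [LinearOrder X] [LinearOrder Y] (parX : X → Bool) (parY : Y → Bool)
    (w : List (X × Y)) : Finset ((X ×ₗ ℕ) × (Y ×ₗ ℕ)) :=
  w.toFinset.biUnion fun p => (Finset.Icc 1 (countPair w p.1 p.2)).image (stdElem parX parY w p)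

lemma mem_stdFinset [LinearOrder X] [LinearOrder Y] {parX : X → Bool} {parY : Y → Bool}
    {w : List (X × Y)} {x : X} {a : ℕ} {y : Y} {bb : ℕ} :
    (toLex (x, a), toLex (y, bb)) ∈ stdFinset parX parY w ↔
      ∃ m, 1 ≤ m ∧ m ≤ countPair w x y ∧ a = lcount parY w x y + m ∧
        bb = (if parY y = false then rcount parX w x y + m
              else rcount parX w x y + countPair w x y + 1 - m) := by
  simp only [stdFinset, Finset.mem_biUnion, Finset.mem_image, Finset.mem_Icc, List.mem_toFinset]
  constructor
  · rintro ⟨⟨px, py⟩, hp, m, ⟨hm1, hm2⟩, he⟩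
    have h1 := congrArg Prod.fst he
    have h2 := congrArg Prod.snd he
    simp only [stdElem] at h1 h2
    have h1' : ((px, lcount parY w px py + m) : X × ℕ) = (x, a) := toLex.injective h1
    have h2' : ((py, if parY py = false then rcount parX w px py + m
        else rcount parX w px py + countPair w px py + 1 - m) : Y × ℕ) = (y, bb) :=
      toLex.injective h2
    obtain ⟨hx, ha⟩ := Prod.mk.injEq .. ▸ h1'
    obtain ⟨hy, hb⟩ := Prod.mk.injEq .. ▸ h2'
    subst hx hy
    exact ⟨m, hm1, hm2, ha.symm, hb.symm⟩
  · rintro ⟨m, hm1, hm2, ha, hb⟩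
    refine ⟨(x, y), mem_of_one_le_countPair (hm1.trans hm2), m, ⟨hm1, hm2⟩, ?_⟩
    subst ha hb; rfl

lemma card_stdFinset [LinearOrder X] [LinearOrder Y] (parX : X → Bool) (parY : Y → Bool)
    (w : List (X × Y)) : (stdFinset parX parY w).card = w.length := by
  classical
  rw [stdFinset, Finset.card_biUnion]
  · have h1 : ∀ p ∈ w.toFinset,
        ((Finset.Icc 1 (countPair w p.1 p.2)).image (stdElem parX parY w p)).card
          = countPair w p.1 p.2 := by
      intro p _
      rw [Finset.card_image_of_injective _ (fun m m' hmm => by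
        have := congrArg Prod.fst hmm
        simp only [stdElem] at this
        have := (Prod.mk.injEq .. ▸ toLex.injective this).2
        omega)]
      rw [Nat.card_Icc]
      omega
    rw [Finset.sum_congr rfl h1]
    have h2 : ∀ p ∈ w.toFinset, countPair w p.1 p.2 = Multiset.count p (↑w : Multiset (X × Y)) := by
      intro p _
      rw [countPair_eq_countP, Multiset.coe_count]
      unfold List.count
      rfl
    rw [Finset.sum_congr rfl h2]
    have := Multiset.toFinset_sum_count_eq (↑w : Multiset (X × Y))
    simpa using this
  · intro p hp p' hp' hne
    rw [Function.onFun, Finset.disjoint_left]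
    rintro e he he'
    obtain ⟨m, _, hem⟩ := Finset.mem_image.mp he
    obtain ⟨m', _, hem'⟩ := Finset.mem_image.mp he'
    apply hne
    have h := hem.trans hem'.symm
    have h1 := congrArg Prod.fst h
    have h2 := congrArg Prod.snd h
    simp only [stdElem] at h1 h2
    have hx := (Prod.mk.injEq .. ▸ toLex.injective h1).1
    have hy := (Prod.mk.injEq .. ▸ toLex.injective h2).1
    exact Prod.ext hx hy

lemma toFinset_eq_stdFinset [LinearOrder X] [LinearOrder Y] {parX : X → Bool} {parY : Y → Bool}
    {w : List (X × Y)} {u : List ((X ×ₗ ℕ) × (Y ×ₗ ℕ))} (hu : IsBulletBiword parX parY w u) :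
    u.toFinset = stdFinset parX parY w := by
  classical
  ext e
  rcases e with ⟨e1, e2⟩
  rcases hx : ofLex e1 with ⟨x, a⟩
  rcases hy : ofLex e2 with ⟨y, bb⟩
  have he1 : e1 = toLex (x, a) := by rw [← hx, toLex_ofLex]
  have he2 : e2 = toLex (y, bb) := by rw [← hy, toLex_ofLex]
  subst he1 he2
  rw [List.mem_toFinset, hu.2.2, mem_stdFinset]

lemma coe_eq_stdFinset_val [LinearOrder X] [LinearOrder Y] {parX : X → Bool} {parY : Y → Bool}
    {w : List (X × Y)} {u : List ((X ×ₗ ℕ) × (Y ×ₗ ℕ))} (hu : IsBulletBiword parX parY w u) :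
    (↑u : Multiset ((X ×ₗ ℕ) × (Y ×ₗ ℕ))) = (stdFinset parX parY w).val := by
  classical
  have h1 : (stdFinset parX parY w).val ≤ (↑u : Multiset ((X ×ₗ ℕ) × (Y ×ₗ ℕ))) := by
    rw [← toFinset_eq_stdFinset hu]
    exact Multiset.dedup_le _
  refine (Multiset.eq_of_le_of_card_le h1 ?_).symm
  rw [Multiset.coe_card, hu.2.1, ← card_stdFinset parX parY w]
  rfl

lemma char_flip (pa pb : Bool) {L R ℓ a b m : ℕ} (hmix : pa ≠ pb → ℓ ≤ 1)
    (h1 : 1 ≤ m) (h2 : m ≤ ℓ) (ha : a = L + m)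
    (hb : b = if pb = false then R + m else R + ℓ + 1 - m) :
    ∃ m', 1 ≤ m' ∧ m' ≤ ℓ ∧ b = R + m' ∧
      a = if pa = false then L + m' else L + ℓ + 1 - m' := by
  have hbf : pb = false → b = R + m := fun h => by rw [hb, if_pos h]
  have hbt : pb = true → b = R + ℓ + 1 - m := fun h => by rw [hb, if_neg (by simp [h])]
  cases pa
  · refine ⟨m, h1, h2, ?_, by rw [if_pos rfl]; omega⟩
    cases pb
    · exact hbf rfl
    · have := hmix (by simp); have := hbt rfl; omega
  · refine ⟨ℓ + 1 - m, by omega, by omega, ?_, by rw [if_neg (by simp)]; omega⟩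
    cases pb
    · have := hmix (by simp); have := hbf rfl; omega
    · have := hbt rfl; omega

lemma stdFinset_swap [LinearOrder X] [LinearOrder Y] {parX : X → Bool} {parY : Y → Bool}
    {w : List (X × Y)} {w' : List (Y × X)} (hres : Restricted parX parY w)
    (hinv : IsInversion parY w w') :
    Finset.map (Equiv.prodComm (X ×ₗ ℕ) (Y ×ₗ ℕ)).toEmbedding (stdFinset parX parY w)
      = stdFinset parY parX w' := by
  classical
  have hperm : w'.Perm (w.map Prod.swap) := Multiset.coe_eq_coe.mp hinv.2
  have hcount : ∀ (x : X) (y : Y), countPair w' y x = countPair w x y := by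
    intro x y
    rw [countPair_eq_countP, countPair_eq_countP, hperm.countP_eq, List.countP_map]
    refine List.countP_congr (fun q _ => ?_)
    rcases q with ⟨qx, qy⟩
    simp [Prod.ext_iff, and_comm]
  have hl : ∀ (x : X) (y : Y), lcount parX w' y x = rcount parX w x y := by
    intro x y
    rw [lcount_eq_countP, rcount_eq_countP, hperm.countP_eq, List.countP_map]
    refine List.countP_congr (fun q _ => ?_)
    simp only [Function.comp_apply, decide_eq_true_eq]
    exact Iff.rfl
  have hr : ∀ (x : X) (y : Y), rcount parY w' y x = lcount parY w x y := by
    intro x y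
    rw [rcount_eq_countP, lcount_eq_countP, hperm.countP_eq, List.countP_map]
    refine List.countP_congr (fun q _ => ?_)
    simp only [Function.comp_apply, decide_eq_true_eq]
    exact Iff.rfl
  have hmix : ∀ (x : X) (y : Y), parX x ≠ parY y → countPair w x y ≤ 1 := by
    intro x y hne
    exact hres (x, y) (by cases hpx : parX x <;> cases hpy : parY y <;> simp_all)
  ext e
  rw [Finset.mem_map_equiv]
  rcases e with ⟨e1, e2⟩
  rcases hy : ofLex e1 with ⟨y, bb⟩
  rcases hx : ofLex e2 with ⟨x, a⟩
  have he1 : e1 = toLex (y, bb) := by rw [← hy, toLex_ofLex]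
  have he2 : e2 = toLex (x, a) := by rw [← hx, toLex_ofLex]
  subst he1 he2
  have hsymm : (Equiv.prodComm (X ×ₗ ℕ) (Y ×ₗ ℕ)).symm (toLex (y, bb), toLex (x, a))
      = (toLex (x, a), toLex (y, bb)) := rfl
  rw [hsymm, mem_stdFinset, mem_stdFinset, hcount, hl, hr]
  constructor
  · rintro ⟨m, hm1, hm2, ha, hb⟩
    exact char_flip (parX x) (parY y) (hmix x y) hm1 hm2 ha hb
  · rintro ⟨m, hm1, hm2, hb, ha⟩
    exact char_flip (parY y) (parX x) (fun hne => hmix x y (Ne.symm hne)) hm1 hm2 hb ha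

/-- Standardization commutes with inversion:
`(w•)^inv = (w^inv)•` for every ordered restricted biword `w`. -/
theorem stmt18 [LinearOrder X] [LinearOrder Y] (parX : X → Bool) (parY : Y → Bool)
    (w : List (X × Y)) (w' : List (Y × X))
    (hord : List.Pairwise (BiLE parX) w) (hres : Restricted parX parY w)
    (hinv : IsInversion parY w w')
    (u : List ((X ×ₗ ℕ) × (Y ×ₗ ℕ))) (hu : IsBulletBiword parX parY w u)
    (v : List ((Y ×ₗ ℕ) × (X ×ₗ ℕ))) (hv : IsBulletBiword parY parX w' v)
    (uinv : List ((Y ×ₗ ℕ) × (X ×ₗ ℕ))) (huinv : IsInversion (bpar parY) u uinv) :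
    uinv = v := by
  classical
  have hU := coe_eq_stdFinset_val hu
  have hV := coe_eq_stdFinset_val hv
  have hswap := stdFinset_swap hres hinv
  have hmul : (↑uinv : Multiset ((Y ×ₗ ℕ) × (X ×ₗ ℕ))) = ↑v := by
    rw [huinv.2, hV, ← hswap, Finset.map_val, ← Multiset.map_coe, hU]
    rfl
  have hperm : uinv.Perm v := Multiset.coe_eq_coe.mp hmul
  haveI : IsAntisymm ((Y ×ₗ ℕ) × (X ×ₗ ℕ)) (BiLE (bpar parY)) := ⟨fun _ _ => biLE_antisymm _⟩
  exact List.Perm.eq_of_pairwise (fun _ _ _ _ => biLE_antisymm _) huinv.1 hv.1 hperm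

end SuperRSK
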